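/- Let T ⊂ ℝ^d be a bounded set, let Δ = diam(T), and for ε > 0 define the global packing entropy h_T(ε) = log M(T, εB₂) and the local packing entropy h_T^loc(ε) = sup_{δ ≥ ε} sup_{x ∈ T} log M(T ∩ (x + 2δB₂), δB₂). Then for every integer k ≥ 1, h_T^loc(Δ2^{-k}) ≤ h_T(Δ2^{-k}) ≤ Σ_{j=1}^{k} h_T^loc(Δ2^{-j}). -/

import Mathlib

open MeasureTheory Metric Set
open scoped ENNReal NNReal

noncomputable section

/-- `packNum A B` is the `B`-packing number of `A`: the largest cardinality of a finite
subset `A₀ ⊆ A` such that `x − y ∉ B` for all distinct `x, y ∈ A₀`. -/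
def packNum {E : Type*} [Sub E] (A B : Set E) : ℕ :=
  sSup {n : ℕ | ∃ s : Finset E, ↑s ⊆ A ∧
    (∀ x ∈ s, ∀ y ∈ s, x ≠ y → x - y ∉ B) ∧ s.card = n}

/-- Global packing entropy `h_T(ε) = log M(T, εB₂)`. -/
def entGlob {d : ℕ} (T : Set (EuclideanSpace ℝ (Fin d))) (ε : ℝ) : ℝ :=
  Real.log (packNum T (closedBall 0 ε))

/-- Local packing entropy
`h_T^loc(ε) = sup_{δ ≥ ε} sup_{x ∈ T} log M(T ∩ (x + 2δB₂), δB₂)`. -/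
def entLoc {d : ℕ} (T : Set (EuclideanSpace ℝ (Fin d))) (ε : ℝ) : ℝ :=
  ⨆ δ : {δ : ℝ // ε ≤ δ}, ⨆ x : T,
    Real.log (packNum (T ∩ closedBall (x : EuclideanSpace ℝ (Fin d)) (2 * δ.1))
      (closedBall 0 δ.1))

namespace Stmt8

variable {E : Type*} [NormedAddCommGroup E]

def packSet (A B : Set E) : Set ℕ :=
  {n : ℕ | ∃ s : Finset E, ↑s ⊆ A ∧
    (∀ x ∈ s, ∀ y ∈ s, x ≠ y → x - y ∉ B) ∧ s.card = n}

lemma packNum_eq (A B : Set E) : packNum A B = sSup (packSet A B) := rfl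

lemma zero_mem_packSet (A B : Set E) : 0 ∈ packSet A B :=
  ⟨∅, by simp, by simp, rfl⟩

lemma not_mem_closedBall_iff {x y : E} {r : ℝ} :
    x - y ∉ closedBall (0 : E) r ↔ r < dist x y := by
  simp [mem_closedBall_zero_iff, dist_eq_norm, not_le]

lemma packSet_bddAbove [ProperSpace E] {A : Set E} (hA : Bornology.IsBounded A)
    {ε : ℝ} (hε : 0 < ε) : BddAbove (packSet A (closedBall (0 : E) ε)) := by
  have htb : TotallyBounded A := hA.isCompact_closure.totallyBounded.subset subset_closure
  obtain ⟨t, htfin, hcov⟩ := totallyBounded_iff.1 htb (ε / 2) (by linarith)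
  refine ⟨htfin.toFinset.card, fun n hn => ?_⟩
  obtain ⟨s, hsA, hsep, rfl⟩ := hn
  have hmap : ∀ x ∈ s, ∃ y ∈ htfin.toFinset, x ∈ ball y (ε / 2) := by
    intro x hx
    obtain ⟨y, hy, hxy⟩ := mem_iUnion₂.1 (hcov (hsA hx))
    exact ⟨y, htfin.mem_toFinset.2 hy, hxy⟩
  classical
  set f : E → E := fun x => if h : ∃ y ∈ htfin.toFinset, x ∈ ball y (ε / 2) then h.choose else x
  refine Finset.card_le_card_of_injOn f (fun x hx => ?_) ?_
  · have h := hmap x hx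
    simp only [f, dif_pos h]
    exact h.choose_spec.1
  · intro x hx y hy hxy
    by_contra hne
    have hx' := hmap x hx
    have hy' := hmap y hy
    have h1 : x ∈ ball (f x) (ε / 2) := by simp only [f, dif_pos hx']; exact hx'.choose_spec.2
    have h2 : y ∈ ball (f y) (ε / 2) := by simp only [f, dif_pos hy']; exact hy'.choose_spec.2
    have := hsep x hx y hy hne
    rw [not_mem_closedBall_iff] at this
    rw [mem_ball] at h1 h2
    have : dist x y ≤ dist x (f x) + dist y (f y) := by
      rw [hxy]; exact dist_triangle_right x y (f y)
    linarith

lemma packNum_mono {A A' B B' : Set E} (h1 : A' ⊆ A) (h2 : B ⊆ B')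
    (hb : BddAbove (packSet A B)) : packNum A' B' ≤ packNum A B := by
  rw [packNum_eq, packNum_eq]
  refine csSup_le_csSup hb ⟨0, zero_mem_packSet _ _⟩ ?_
  rintro n ⟨s, hsA, hsep, rfl⟩
  exact ⟨s, hsA.trans h1, fun x hx y hy hxy => fun hB => hsep x hx y hy hxy (h2 hB), rfl⟩

lemma le_packNum {A B : Set E} (hb : BddAbove (packSet A B)) {n : ℕ}
    (hn : n ∈ packSet A B) : n ≤ packNum A B := le_csSup hb hn

lemma one_le_packNum {A B : Set E} (hb : BddAbove (packSet A B)) {a : E}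
    (ha : a ∈ A) : 1 ≤ packNum A B := by
  refine le_packNum hb ⟨{a}, by simpa, ?_, Finset.card_singleton a⟩
  intro x hx y hy hxy
  simp only [Finset.mem_singleton] at hx hy
  exact absurd (hx.trans hy.symm) hxy

lemma packNum_le {A B : Set E} {N : ℕ} (h : ∀ n ∈ packSet A B, n ≤ N) :
    packNum A B ≤ N := csSup_le ⟨0, zero_mem_packSet _ _⟩ h

lemma packNum_mem {A B : Set E} (hb : BddAbove (packSet A B)) :
    packNum A B ∈ packSet A B := Nat.sSup_mem ⟨0, zero_mem_packSet _ _⟩ hb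

lemma packNum_le_one_of_subsingleton {A B : Set E} (hA : A.Subsingleton) :
    packNum A B ≤ 1 := by
  refine packNum_le ?_
  rintro n ⟨s, hsA, -, rfl⟩
  refine Finset.card_le_one.2 fun a ha b hb => hA (hsA ha) (hsA hb)

lemma log_packNum_eq_zero_of_subsingleton {A B : Set E} (hA : A.Subsingleton) :
    Real.log (packNum A B) = 0 := by
  have := packNum_le_one_of_subsingleton (B := B) hA
  interval_cases h : packNum A B <;> simp

lemma log_nat_mono {n m : ℕ} (h : n ≤ m) : Real.log n ≤ Real.log m := by
  rcases Nat.eq_zero_or_pos n with h0 | h0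
  · simp only [h0, Nat.cast_zero, Real.log_zero]
    exact Real.log_natCast_nonneg m
  · exact Real.log_le_log (by exact_mod_cast h0) (by exact_mod_cast h)

end Stmt8

namespace Stmt8

variable {E : Type*} [NormedAddCommGroup E]

lemma key_card [ProperSpace E] {T : Set E} (hT : Bornology.IsBounded T)
    (hne : T.Nonempty) {δ : ℝ} (hδ : 0 < δ) :
    ∃ θ ∈ T, packNum T (closedBall (0 : E) δ) ≤
      packNum T (closedBall (0 : E) (2 * δ)) *
        packNum (T ∩ closedBall θ (2 * δ)) (closedBall (0 : E) δ) := by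
  classical
  have hb1 := packSet_bddAbove hT hδ
  have hb2 := packSet_bddAbove hT (by linarith : (0:ℝ) < 2 * δ)
  obtain ⟨s, hsT, hsep, hscard⟩ := packNum_mem hb1
  obtain ⟨c, hcT, hcsep, hccard⟩ := packNum_mem hb2
  -- maximality: c is a 2δ-cover of T
  have hcov : ∀ t ∈ T, ∃ θ ∈ c, dist t θ ≤ 2 * δ := by
    intro t ht
    by_contra hcon
    push_neg at hcon
    have htc : t ∉ c := fun htc => absurd (hcon t htc) (by simp [hδ]; linarith)
    have hmem : (insert t c).card ∈ packSet T (closedBall (0 : E) (2 * δ)) := by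
      refine ⟨insert t c, ?_, ?_, rfl⟩
      · intro x hx
        rcases Finset.mem_insert.1 hx with rfl | hx
        · exact ht
        · exact hcT hx
      · intro x hx y hy hxy
        rw [not_mem_closedBall_iff]
        rcases Finset.mem_insert.1 hx with hx' | hx' <;>
          rcases Finset.mem_insert.1 hy with hy' | hy'
        · exact absurd (hx'.trans hy'.symm) hxy
        · rw [hx']; exact hcon y hy'
        · rw [hy', dist_comm]; exact hcon x hx'
        · rw [← not_mem_closedBall_iff]; exact hcsep x hx' y hy' hxy
    have := le_packNum hb2 hmem
    rw [Finset.card_insert_of_notMem htc, hccard] at this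
    omega
  -- assign each packing point to a cover center
  have hmap : ∀ x ∈ s, ∃ θ ∈ c, dist x θ ≤ 2 * δ := fun x hx => hcov x (hsT hx)
  set f : E → E := fun x => if h : ∃ θ ∈ c, dist x θ ≤ 2 * δ then h.choose else x with hf
  have hfmem : ∀ x ∈ s, f x ∈ c ∧ dist x (f x) ≤ 2 * δ := by
    intro x hx
    have h := hmap x hx
    simp only [hf, dif_pos h]
    exact ⟨h.choose_spec.1, h.choose_spec.2⟩
  -- c nonempty
  obtain ⟨a, haT⟩ := hne
  obtain ⟨θ', hθ'c, -⟩ := hcov a haT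
  have hcne : c.Nonempty := ⟨θ', hθ'c⟩
  -- fiber counting
  set g : E → ℕ := fun θ => packNum (T ∩ closedBall θ (2 * δ)) (closedBall (0 : E) δ) with hg
  obtain ⟨θ₀, hθ₀c, hθ₀max⟩ := Finset.exists_max_image c g hcne
  refine ⟨θ₀, hcT hθ₀c, ?_⟩
  have hcard : s.card = ∑ θ ∈ c, (s.filter fun x => f x = θ).card :=
    Finset.card_eq_sum_card_fiberwise fun x hx => (hfmem x hx).1
  have hfiber : ∀ θ ∈ c, (s.filter fun x => f x = θ).card ≤ g θ := by
    intro θ hθ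
    refine le_packNum (BddAbove.mono ?_ hb1) ⟨_, ?_, ?_, rfl⟩
    · rintro n ⟨u, huA, husep, rfl⟩
      exact ⟨u, huA.trans inter_subset_left, husep, rfl⟩
    · intro x hx
      rw [Finset.coe_filter] at hx
      obtain ⟨hxs, hfx⟩ := hx
      refine ⟨hsT hxs, ?_⟩
      rw [mem_closedBall, ← hfx]
      exact (hfmem x hxs).2
    · intro x hx y hy hxy
      rw [Finset.mem_filter] at hx hy
      exact hsep x hx.1 y hy.1 hxy
  calc packNum T (closedBall (0 : E) δ) = s.card := hscard.symm
    _ = ∑ θ ∈ c, (s.filter fun x => f x = θ).card := hcard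
    _ ≤ ∑ θ ∈ c, g θ₀ := by
        refine Finset.sum_le_sum fun θ hθ => (hfiber θ hθ).trans (hθ₀max θ hθ)
    _ = c.card * g θ₀ := by rw [Finset.sum_const, smul_eq_mul]
    _ = packNum T (closedBall (0 : E) (2 * δ)) * g θ₀ := by rw [hccard]

end Stmt8

namespace Stmt8

variable {d : ℕ} {T : Set (EuclideanSpace ℝ (Fin d))}

lemma termBound (hT : Bornology.IsBounded T) {ε : ℝ} (hε : 0 < ε) {δ : ℝ} (hδ : ε ≤ δ)
    (x : EuclideanSpace ℝ (Fin d)) :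
    Real.log (packNum (T ∩ closedBall x (2 * δ)) (closedBall 0 δ)) ≤ entGlob T ε := by
  exact log_nat_mono (packNum_mono inter_subset_left
    (closedBall_subset_closedBall hδ) (packSet_bddAbove hT hε))

lemma bdd_inner (hT : Bornology.IsBounded T) {ε : ℝ} (hε : 0 < ε)
    (δ' : {δ : ℝ // ε ≤ δ}) :
    BddAbove (Set.range fun x : T =>
      Real.log (packNum (T ∩ closedBall (x : EuclideanSpace ℝ (Fin d)) (2 * δ'.1))
        (closedBall 0 δ'.1))) := by
  refine ⟨entGlob T ε, ?_⟩
  rintro y ⟨x, rfl⟩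
  exact termBound hT hε δ'.2 x

lemma entLoc_le_entGlob (hT : Bornology.IsBounded T) (hne : T.Nonempty)
    {ε : ℝ} (hε : 0 < ε) : entLoc T ε ≤ entGlob T ε := by
  have h1 : Nonempty {δ : ℝ // ε ≤ δ} := ⟨⟨ε, le_rfl⟩⟩
  have h2 : Nonempty T := hne.to_subtype
  exact ciSup_le fun δ' => ciSup_le fun x => termBound hT hε δ'.2 x

lemma key_log (hT : Bornology.IsBounded T) (hne : T.Nonempty) {δ : ℝ} (hδ : 0 < δ) :
    entGlob T δ ≤ entGlob T (2 * δ) + entLoc T δ := by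
  obtain ⟨θ, hθT, hle⟩ := key_card hT hne hδ
  set n := packNum T (closedBall (0 : EuclideanSpace ℝ (Fin d)) δ) with hn
  set N := packNum T (closedBall (0 : EuclideanSpace ℝ (Fin d)) (2 * δ)) with hN
  set m := packNum (T ∩ closedBall θ (2 * δ))
    (closedBall (0 : EuclideanSpace ℝ (Fin d)) δ) with hm
  have hn1 : 1 ≤ n := one_le_packNum (packSet_bddAbove hT hδ) hθT
  have hNpos : 0 < N := by
    rcases Nat.eq_zero_or_pos N with h | h
    · rw [h, zero_mul] at hle; omega
    · exact h
  have hmpos : 0 < m := by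
    rcases Nat.eq_zero_or_pos m with h | h
    · rw [h, mul_zero] at hle; omega
    · exact h
  have hlogm : Real.log m ≤ entLoc T δ := by
    have h1 : Nonempty {δ' : ℝ // δ ≤ δ'} := ⟨⟨δ, le_rfl⟩⟩
    have h2 : Nonempty T := hne.to_subtype
    have step1 : Real.log m ≤ ⨆ x : T,
        Real.log (packNum (T ∩ closedBall (x : EuclideanSpace ℝ (Fin d)) (2 * δ))
          (closedBall 0 δ)) :=
      le_ciSup (bdd_inner hT hδ ⟨δ, le_rfl⟩) (⟨θ, hθT⟩ : T)
    refine step1.trans ?_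
    have hbo : BddAbove (Set.range fun δ' : {δ' : ℝ // δ ≤ δ'} => ⨆ x : T,
        Real.log (packNum (T ∩ closedBall (x : EuclideanSpace ℝ (Fin d)) (2 * δ'.1))
          (closedBall 0 δ'.1))) := by
      refine ⟨entGlob T δ, ?_⟩
      rintro y ⟨δ', rfl⟩
      exact ciSup_le fun x => termBound hT hδ δ'.2 x
    exact le_ciSup hbo (⟨δ, le_rfl⟩ : {δ' : ℝ // δ ≤ δ'})
  have hcalc : Real.log n ≤ Real.log N + Real.log m := by
    calc Real.log n ≤ Real.log ((N * m : ℕ) : ℝ) := log_nat_mono hle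
      _ = Real.log ((N : ℝ) * (m : ℝ)) := by push_cast; ring_nf
      _ = Real.log N + Real.log m := Real.log_mul
          (by exact_mod_cast hNpos.ne') (by exact_mod_cast hmpos.ne')
  exact hcalc.trans (add_le_add_right hlogm _)

lemma entGlob_diam_nonpos (hT : Bornology.IsBounded T) : entGlob T (diam T) ≤ 0 := by
  have h : packNum T (closedBall (0 : EuclideanSpace ℝ (Fin d)) (diam T)) ≤ 1 := by
    refine packNum_le ?_
    rintro k ⟨s, hsT, hsep, rfl⟩
    refine Finset.card_le_one.2 fun a ha b hb => ?_
    by_contra hab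
    have := hsep a ha b hb hab
    rw [not_mem_closedBall_iff] at this
    exact absurd (dist_le_diam_of_mem hT (hsT ha) (hsT hb)) (not_le.2 this)
  calc entGlob T (diam T) ≤ Real.log (1 : ℕ) := log_nat_mono h
    _ = 0 := by simp

lemma entLoc_eq_zero_of_subsingleton (hsub : T.Subsingleton) (ε : ℝ) :
    entLoc T ε = 0 := by
  have hterm : ∀ (δ' : {δ : ℝ // ε ≤ δ}),
      (⨆ x : T, Real.log (packNum (T ∩ closedBall (x : EuclideanSpace ℝ (Fin d)) (2 * δ'.1))
        (closedBall 0 δ'.1))) = 0 := by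
    intro δ'
    rcases isEmpty_or_nonempty T with hT | hT
    · exact Real.iSup_of_isEmpty _
    · have : ∀ x : T, Real.log (packNum
          (T ∩ closedBall (x : EuclideanSpace ℝ (Fin d)) (2 * δ'.1))
          (closedBall 0 δ'.1)) = 0 := fun x =>
        log_packNum_eq_zero_of_subsingleton (hsub.anti inter_subset_left)
      simp only [this]
      exact ciSup_const
  unfold entLoc
  simp only [hterm]
  have h1 : Nonempty {δ : ℝ // ε ≤ δ} := ⟨⟨ε, le_rfl⟩⟩
  exact ciSup_const

end Stmt8

/-- For bounded `T ⊆ ℝ^d` with `Δ = diam T` and every integer `k ≥ 1`,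
`h_T^loc(Δ2^{-k}) ≤ h_T(Δ2^{-k}) ≤ Σ_{j=1}^k h_T^loc(Δ2^{-j})`. -/
theorem statement8 {d : ℕ} (T : Set (EuclideanSpace ℝ (Fin d)))
    (hbd : Bornology.IsBounded T) (k : ℕ) (hk : 1 ≤ k) :
    entLoc T (diam T * 2 ^ (-(k : ℤ))) ≤ entGlob T (diam T * 2 ^ (-(k : ℤ))) ∧
    entGlob T (diam T * 2 ^ (-(k : ℤ))) ≤
      ∑ j ∈ Finset.Icc 1 k, entLoc T (diam T * 2 ^ (-(j : ℤ))) := by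
  rcases eq_or_lt_of_le (diam_nonneg (s := T)) with hΔ0 | hΔpos
  · -- degenerate case: diam T = 0, T is subsingleton
    have hsub : T.Subsingleton := by
      have h0 : EMetric.diam T = 0 := by
        have h := hΔ0.symm
        rw [Metric.diam] at h
        rcases (ENNReal.toReal_eq_zero_iff _).1 h with h' | h'
        · exact h'
        · exact absurd h' hbd.ediam_ne_top
      exact EMetric.diam_eq_zero_iff.1 h0
    have hglob : ∀ ε : ℝ, entGlob T ε = 0 := fun ε =>
      Stmt8.log_packNum_eq_zero_of_subsingleton hsub
    constructor
    · rw [Stmt8.entLoc_eq_zero_of_subsingleton hsub, hglob]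
    · rw [hglob]
      simp [Stmt8.entLoc_eq_zero_of_subsingleton hsub]
  · -- main case
    rcases T.eq_empty_or_nonempty with rfl | hne
    · simp at hΔpos
    have hε : ∀ j : ℕ, (0:ℝ) < diam T * 2 ^ (-(j : ℤ)) := fun j =>
      mul_pos hΔpos (zpow_pos two_pos _)
    refine ⟨Stmt8.entLoc_le_entGlob hbd hne (hε k), ?_⟩
    have main : ∀ n : ℕ, entGlob T (diam T * 2 ^ (-(n : ℤ))) ≤
        ∑ j ∈ Finset.Icc 1 n, entLoc T (diam T * 2 ^ (-(j : ℤ))) := by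
      intro n
      induction n with
      | zero =>
        simp only [Nat.cast_zero, neg_zero, zpow_zero, mul_one]
        have : Finset.Icc 1 0 = (∅ : Finset ℕ) := by decide
        rw [this, Finset.sum_empty]
        exact Stmt8.entGlob_diam_nonpos hbd
      | succ n ih =>
        have h2 : 2 * (diam T * 2 ^ (-((n:ℕ)+1 : ℤ))) = diam T * 2 ^ (-(n : ℤ)) := by
          rw [mul_comm (2 : ℝ), mul_assoc, ← zpow_add_one₀ (two_ne_zero)]
          norm_num
        have hcast : (-(↑(n+1) : ℤ)) = (-((n:ℕ)+1 : ℤ)) := by push_cast; ring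
        rw [hcast]
        calc entGlob T (diam T * 2 ^ (-((n:ℕ)+1 : ℤ)))
            ≤ entGlob T (2 * (diam T * 2 ^ (-((n:ℕ)+1 : ℤ)))) +
              entLoc T (diam T * 2 ^ (-((n:ℕ)+1 : ℤ))) := by
              refine Stmt8.key_log hbd hne ?_
              exact mul_pos hΔpos (zpow_pos two_pos _)
          _ = entGlob T (diam T * 2 ^ (-(n : ℤ))) +
              entLoc T (diam T * 2 ^ (-((n:ℕ)+1 : ℤ))) := by rw [h2]
          _ ≤ (∑ j ∈ Finset.Icc 1 n, entLoc T (diam T * 2 ^ (-(j : ℤ)))) +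
              entLoc T (diam T * 2 ^ (-((n:ℕ)+1 : ℤ))) := add_le_add_left ih _
          _ = ∑ j ∈ Finset.Icc 1 (n+1), entLoc T (diam T * 2 ^ (-(j : ℤ))) := by
              rw [← Finset.insert_Icc_right_eq_Icc_add_one (by omega : 1 ≤ n + 1),
                Finset.sum_insert (by simp)]
              rw [← hcast]
              ring
    exact main k
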